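/- The transmuted antipode S̲ is an antipode for the transmuted coalgebra structure: μ ∘ (id_H ⊗ S̲) ∘ Δ̲ = μ ∘ (S̲ ⊗ id_H) ∘ Δ̲ = η ∘ ε, where μ and η are the multiplication and unit of H; elementwise, Σ y⟨1⟩ S̲(y⟨2⟩) = Σ S̲(y⟨1⟩) y⟨2⟩ = ε(y)·1 for all y ∈ H, where Δ̲(y) = Σ y⟨1⟩ ⊗ y⟨2⟩. -/

import Mathlib

open scoped TensorProduct
open TensorProduct

variable (k : Type*) [CommRing k] (H : Type*) [Ring H] [HopfAlgebra k H]

/-- The antipode `S`. -/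
noncomputable def aS : H →ₗ[k] H := HopfAlgebra.antipode (R := k)

/-- Multiplication of `H` as a linear map on the tensor square. -/
noncomputable def mulH : H ⊗[k] H →ₗ[k] H := LinearMap.mul' k H

/-- The left adjoint action as a linear map `H ⊗ H → H`, `x ⊗ y ↦ Σ x₍₁₎ * y * S (x₍₂₎)`. -/
noncomputable def adT : H ⊗[k] H →ₗ[k] H :=
  mulH k H ∘ₗ
  LinearMap.lTensor H
    (mulH k H ∘ₗ (TensorProduct.comm k H H).toLinearMap ∘ₗ LinearMap.rTensor H (aS k H)) ∘ₗ
  (TensorProduct.assoc k H H H).toLinearMap ∘ₗ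
  LinearMap.rTensor H (Coalgebra.comul (R := k))

/-- The left adjoint action of a fixed element `x`, as a linear map `y ↦ x ▷ y`. -/
noncomputable def adL (x : H) : H →ₗ[k] H := adT k H ∘ₗ TensorProduct.mk k H H x

/-- The left adjoint action `x ▷ y = Σ x₍₁₎ y S(x₍₂₎)`. -/
noncomputable def ad (x y : H) : H := adL k H x y

variable {ι : Type*} [Fintype ι]

/-- The braiding of `Mod H` on `H ⊗ H`: `ψ(x ⊗ y) = Σᵢ (βᵢ ▷ y) ⊗ (αᵢ ▷ x)`. -/
noncomputable def psiL (α β : ι → H) : H ⊗[k] H →ₗ[k] H ⊗[k] H :=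
  ∑ i, (TensorProduct.map (adL k H (β i)) (adL k H (α i))) ∘ₗ
        (TensorProduct.comm k H H).toLinearMap

/-- The transmuted comultiplication `Δ̲(x) = Σᵢ Σ x₍₁₎ S(βᵢ) ⊗ (αᵢ ▷ x₍₂₎)`. -/
noncomputable def DeltaB (α β : ι → H) : H →ₗ[k] H ⊗[k] H :=
  ∑ i, (TensorProduct.map (LinearMap.mulRight k (aS k H (β i))) (adL k H (α i))) ∘ₗ
        (Coalgebra.comul (R := k))

/-- The transmuted antipode `S̲(x) = Σᵢ βᵢ S(αᵢ ▷ x)`. -/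
noncomputable def SB (α β : ι → H) : H →ₗ[k] H :=
  ∑ i, LinearMap.mulLeft k (β i) ∘ₗ aS k H ∘ₗ adL k H (α i)

namespace HopfAux

open LinearMap Coalgebra

variable {k H}

local notation "S" => aS k H
local notation "ε" => Coalgebra.counit (R := k)
local notation "Δ" => Coalgebra.comul (R := k)
local notation "μ" => mulH k H

lemma mulH_tmul (a b : H) : μ (a ⊗ₜ[k] b) = a * b := rfl

/-- the inner workhorse: `act0 ((c ⊗ d) ⊗ z) = c * (z * S d)`. -/
noncomputable def act0 : (H ⊗[k] H) ⊗[k] H →ₗ[k] H :=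
  mulH k H ∘ₗ
  LinearMap.lTensor H
    (mulH k H ∘ₗ (TensorProduct.comm k H H).toLinearMap ∘ₗ LinearMap.rTensor H (aS k H)) ∘ₗ
  (TensorProduct.assoc k H H H).toLinearMap

lemma act0_tmul (c d z : H) : act0 ((c ⊗ₜ[k] d) ⊗ₜ[k] z) = c * (z * S d) := by
  simp [act0, mulH, comp_apply, assoc_tmul, lTensor_tmul, rTensor_tmul, comm_tmul, mul'_apply]

lemma adT_apply_tmul (a z : H) : adT k H (a ⊗ₜ[k] z) = act0 ((Δ a) ⊗ₜ[k] z) := by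
  simp [adT, act0, comp_apply, rTensor_tmul]

lemma adT_repr (a z : H) (r : Coalgebra.Repr k a (H × H)) :
    adT k H (a ⊗ₜ[k] z) = ∑ i ∈ r.index, r.left i * (z * S (r.right i)) := by
  rw [adT_apply_tmul, ← r.eq, sum_tmul, map_sum]
  exact Finset.sum_congr rfl fun i _ => act0_tmul _ _ _

lemma aS_one : S 1 = (1 : H) := by
  have h := HopfAlgebra.mul_antipode_rTensor_comul_apply (R := k) (A := H) 1
  rw [Bialgebra.comul_one, Algebra.TensorProduct.one_def, rTensor_tmul,
    mul'_apply, mul_one] at h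
  exact HopfAlgebra.antipode_one (R := k) (A := H)

lemma adT_one_left (z : H) : adT k H ((1 : H) ⊗ₜ[k] z) = z := by
  rw [adT_apply_tmul, Bialgebra.comul_one, Algebra.TensorProduct.one_def, act0_tmul,
    aS_one, mul_one, one_mul]

@[simp] lemma antipode_apply_eq (x : H) :
    HopfAlgebra.antipode (R := k) x = S x := rfl

lemma counit_right' (a : H) (r : Coalgebra.Repr k a (H × H)) :
    ∑ i ∈ r.index, ε (r.right i) • r.left i = a := by
  have h := congrArg (TensorProduct.rid k H) (Coalgebra.sum_tmul_counit_eq r)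
  rw [map_sum] at h
  simpa using h

lemma counit_left' (a : H) (r : Coalgebra.Repr k a (H × H)) :
    ∑ i ∈ r.index, ε (r.left i) • r.right i = a := by
  have h := congrArg (TensorProduct.lid k H) (Coalgebra.sum_counit_tmul_eq r)
  rw [map_sum] at h
  simpa using h

lemma sum_aS_mul (a : H) (r : Coalgebra.Repr k a (H × H)) :
    ∑ i ∈ r.index, S (r.left i) * r.right i = ε a • 1 := by
  simpa using HopfAlgebra.sum_antipode_mul_eq_smul r

lemma sum_mul_aS (a : H) (r : Coalgebra.Repr k a (H × H)) :
    ∑ i ∈ r.index, r.left i * S (r.right i) = ε a • 1 := by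
  simpa using HopfAlgebra.sum_mul_antipode_eq_smul r

/-- `Σ (S(a₁) a₂) ⊗ a₃ = 1 ⊗ a`. -/
lemma SL1 (a : H) (r : Coalgebra.Repr k a (H × H)) (r2 : ∀ i : r.ι, Coalgebra.Repr k (r.right i) (H × H)) :
    ∑ i ∈ r.index, ∑ p ∈ (r2 i).index,
      ((S (r.left i) * (r2 i).left p) ⊗ₜ[k] (r2 i).right p) = (1 : H) ⊗ₜ[k] a := by
  classical
  set r1 : ∀ i : r.ι, Coalgebra.Repr k (r.left i) (H × H) := fun i => Coalgebra.Repr.arbitrary k (r.left i)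
  have h := Coalgebra.sum_tmul_tmul_eq r r1 r2
  have h2 := congrArg (LinearMap.rTensor H (LinearMap.mul' k H ∘ₗ LinearMap.rTensor H (aS k H))
      ∘ₗ (TensorProduct.assoc k H H H).symm.toLinearMap) h
  simp only [map_sum, LinearMap.comp_apply, LinearEquiv.coe_coe, TensorProduct.assoc_symm_tmul,
    LinearMap.rTensor_tmul, LinearMap.mul'_apply] at h2
  rw [← h2]
  rw [Finset.sum_congr rfl (fun i _ => by
    rw [← TensorProduct.sum_tmul, sum_aS_mul _ (r1 i), TensorProduct.smul_tmul] :
    ∀ i ∈ r.index, _ = (1:H) ⊗ₜ[k] (ε (r.left i) • r.right i))]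
  rw [← TensorProduct.tmul_sum, counit_left' a r]

lemma aS_mul (a b : H) : S (a * b) = S b * S a := by
  classical
  set ra := Coalgebra.Repr.arbitrary k a with hra
  set rb := Coalgebra.Repr.arbitrary k b with hrb
  set r2a : ∀ i : ra.ι, Coalgebra.Repr k (ra.right i) (H × H) :=
    fun i => Coalgebra.Repr.arbitrary k (ra.right i) with hr2a
  set r2b : ∀ j : rb.ι, Coalgebra.Repr k (rb.right j) (H × H) :=
    fun j => Coalgebra.Repr.arbitrary k (rb.right j) with hr2b
  have key : ∑ j ∈ rb.index, ∑ q ∈ (r2b j).index, ∑ i ∈ ra.index, ∑ p ∈ (r2a i).index,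
      S (rb.left j) * (S (ra.left i) * ((r2a i).left p * ((r2b j).left q
        * S ((r2a i).right p * (r2b j).right q))))
      = S b * S a := by
    rw [Finset.sum_congr rfl (fun j _ => Finset.sum_comm)]
    rw [Finset.sum_comm]
    rw [Finset.sum_congr rfl (fun i _ => Finset.sum_congr rfl (fun j _ => Finset.sum_comm))]
    have inner : ∀ i ∈ ra.index, ∀ j ∈ rb.index,
        ∑ p ∈ (r2a i).index, ∑ q ∈ (r2b j).index,
          S (rb.left j) * (S (ra.left i) * ((r2a i).left p * ((r2b j).left q
            * S ((r2a i).right p * (r2b j).right q))))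
        = (ε (rb.right j) • S (rb.left j)) * (ε (ra.right i) • S (ra.left i)) := by
      intro i _ j _
      have hcm : Coalgebra.comul (R := k) (ra.right i * rb.right j)
          = ∑ p ∈ (r2a i).index, ∑ q ∈ (r2b j).index,
            ((r2a i).left p * (r2b j).left q) ⊗ₜ[k] ((r2a i).right p * (r2b j).right q) := by
        rw [Bialgebra.comul_mul, ← (r2a i).eq, ← (r2b j).eq, Finset.sum_mul_sum]
        simp only [Algebra.TensorProduct.tmul_mul_tmul]
      have hax := HopfAlgebra.mul_antipode_lTensor_comul_apply (R := k)
        (a := ra.right i * rb.right j)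
      rw [hcm] at hax
      simp only [map_sum, LinearMap.lTensor_tmul, LinearMap.mul'_apply,
        antipode_apply_eq] at hax
      calc ∑ p ∈ (r2a i).index, ∑ q ∈ (r2b j).index,
          S (rb.left j) * (S (ra.left i) * ((r2a i).left p * ((r2b j).left q
            * S ((r2a i).right p * (r2b j).right q))))
          = S (rb.left j) * (S (ra.left i) * ∑ p ∈ (r2a i).index, ∑ q ∈ (r2b j).index,
              ((r2a i).left p * (r2b j).left q) * S ((r2a i).right p * (r2b j).right q)) := by
            simp only [Finset.mul_sum]
            exact Finset.sum_congr rfl fun p _ => Finset.sum_congr rfl fun q _ => by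
              noncomm_ring
        _ = S (rb.left j) * (S (ra.left i) * algebraMap k H (ε (ra.right i * rb.right j))) := by
            rw [hax]
        _ = (ε (rb.right j) • S (rb.left j)) * (ε (ra.right i) • S (ra.left i)) := by
            simp only [Bialgebra.counit_mul, Algebra.algebraMap_eq_smul_one, mul_smul_comm,
              smul_mul_assoc, smul_smul, mul_one]
    rw [Finset.sum_congr rfl (fun i hi => Finset.sum_congr rfl (fun j hj => inner i hi j hj))]
    have hSb : ∑ j ∈ rb.index, ε (rb.right j) • S (rb.left j) = S b :=
      calc ∑ j ∈ rb.index, ε (rb.right j) • S (rb.left j)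
          = (aS k H) (∑ j ∈ rb.index, ε (rb.right j) • rb.left j) := by
            rw [map_sum]; exact Finset.sum_congr rfl fun j _ => (map_smul _ _ _).symm
        _ = S b := by rw [counit_right' b rb]
    have hSa : ∑ i ∈ ra.index, ε (ra.right i) • S (ra.left i) = S a :=
      calc ∑ i ∈ ra.index, ε (ra.right i) • S (ra.left i)
          = (aS k H) (∑ i ∈ ra.index, ε (ra.right i) • ra.left i) := by
            rw [map_sum]; exact Finset.sum_congr rfl fun i _ => (map_smul _ _ _).symm
        _ = S a := by rw [counit_right' a ra]
    calc ∑ i ∈ ra.index, ∑ j ∈ rb.index,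
        (ε (rb.right j) • S (rb.left j)) * (ε (ra.right i) • S (ra.left i))
        = ∑ i ∈ ra.index, (∑ j ∈ rb.index, ε (rb.right j) • S (rb.left j))
            * (ε (ra.right i) • S (ra.left i)) := by
          exact Finset.sum_congr rfl fun i _ => (Finset.sum_mul _ _ _).symm
      _ = (∑ j ∈ rb.index, ε (rb.right j) • S (rb.left j))
            * ∑ i ∈ ra.index, ε (ra.right i) • S (ra.left i) := by rw [Finset.mul_sum]
      _ = S b * S a := by rw [hSa, hSb]
  rw [← key]
  have step1 : ∀ j ∈ rb.index, ∀ q ∈ (r2b j).index,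
      ∑ i ∈ ra.index, ∑ p ∈ (r2a i).index,
        S (rb.left j) * (S (ra.left i) * ((r2a i).left p * ((r2b j).left q
          * S ((r2a i).right p * (r2b j).right q))))
      = S (rb.left j) * ((r2b j).left q * S (a * (r2b j).right q)) := by
    intro j _ q _
    have hmap := congrArg (LinearMap.mulLeft k (S (rb.left j)) ∘ₗ LinearMap.mul' k H ∘ₗ
      TensorProduct.map LinearMap.id
        ((LinearMap.mulLeft k ((r2b j).left q)).comp
          ((aS k H) ∘ₗ LinearMap.mulRight k ((r2b j).right q)))) (SL1 a ra r2a)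
    simp only [map_sum, LinearMap.comp_apply, TensorProduct.map_tmul, LinearMap.mul'_apply,
      LinearMap.mulLeft_apply, LinearMap.mulRight_apply, LinearMap.id_apply] at hmap
    rw [one_mul] at hmap
    rw [← hmap]
    exact Finset.sum_congr rfl fun i _ => Finset.sum_congr rfl fun p _ => by noncomm_ring
  rw [Finset.sum_congr rfl (fun j hj => Finset.sum_congr rfl (fun q hq => step1 j hj q hq))]
  have hmap2 := congrArg (LinearMap.mul' k H ∘ₗ
    TensorProduct.map LinearMap.id ((aS k H) ∘ₗ LinearMap.mulLeft k a)) (SL1 b rb r2b)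
  simp only [map_sum, LinearMap.comp_apply, TensorProduct.map_tmul, LinearMap.mul'_apply,
    LinearMap.mulLeft_apply, LinearMap.id_apply] at hmap2
  rw [one_mul] at hmap2
  rw [← hmap2]
  exact Finset.sum_congr rfl fun j _ => Finset.sum_congr rfl fun q _ => by noncomm_ring

lemma comul_mul_repr (a b : H) (ra : Coalgebra.Repr k a (H × H)) (rb : Coalgebra.Repr k b (H × H)) :
    Coalgebra.comul (R := k) (a * b)
      = ∑ i ∈ ra.index, ∑ j ∈ rb.index,
          (ra.left i * rb.left j) ⊗ₜ[k] (ra.right i * rb.right j) := by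
  rw [Bialgebra.comul_mul, ← ra.eq, ← rb.eq, Finset.sum_mul_sum]
  simp only [Algebra.TensorProduct.tmul_mul_tmul]

lemma adT_mul (a b z : H) :
    adT k H ((a * b) ⊗ₜ[k] z) = adT k H (a ⊗ₜ[k] adT k H (b ⊗ₜ[k] z)) := by
  classical
  set ra := Coalgebra.Repr.arbitrary k a
  set rb := Coalgebra.Repr.arbitrary k b
  have lhs : adT k H ((a * b) ⊗ₜ[k] z)
      = ∑ i ∈ ra.index, ∑ j ∈ rb.index,
          (ra.left i * rb.left j) * (z * S (ra.right i * rb.right j)) := by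
    rw [adT_apply_tmul, comul_mul_repr a b ra rb]
    rw [TensorProduct.sum_tmul, map_sum]
    exact Finset.sum_congr rfl fun i _ => by
      rw [TensorProduct.sum_tmul, map_sum]
      exact Finset.sum_congr rfl fun j _ => act0_tmul _ _ _
  have rhs : adT k H (a ⊗ₜ[k] adT k H (b ⊗ₜ[k] z))
      = ∑ i ∈ ra.index, ∑ j ∈ rb.index,
          ra.left i * ((rb.left j * (z * S (rb.right j))) * S (ra.right i)) := by
    rw [adT_repr b z rb, TensorProduct.tmul_sum, map_sum]
    rw [Finset.sum_congr rfl (fun j (_ : j ∈ rb.index) => adT_repr a _ ra)]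
    exact Finset.sum_comm
  rw [lhs, rhs]
  exact Finset.sum_congr rfl fun i _ => Finset.sum_congr rfl fun j _ => by
    rw [aS_mul]; noncomm_ring

noncomputable def epsL : H ⊗[k] H →ₗ[k] H :=
  (TensorProduct.lid k H).toLinearMap ∘ₗ LinearMap.rTensor H (Coalgebra.counit (R := k))

noncomputable def epsR : H ⊗[k] H →ₗ[k] H :=
  (TensorProduct.rid k H).toLinearMap ∘ₗ LinearMap.lTensor H (Coalgebra.counit (R := k))

@[simp] lemma epsL_tmul (a b : H) : (epsL : H ⊗[k] H →ₗ[k] H) (a ⊗ₜ[k] b) = ε a • b := by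
  simp [epsL, comp_apply, rTensor_tmul]

@[simp] lemma epsR_tmul (a b : H) : (epsR : H ⊗[k] H →ₗ[k] H) (a ⊗ₜ[k] b) = ε b • a := by
  simp [epsR, comp_apply, lTensor_tmul]

@[simp] lemma epsL_comul (a : H) : (epsL : H ⊗[k] H →ₗ[k] H) (Δ a) = a := by
  simp [epsL, comp_apply, Coalgebra.rTensor_counit_comul]

@[simp] lemma epsR_comul (a : H) : (epsR : H ⊗[k] H →ₗ[k] H) (Δ a) = a := by
  simp [epsR, comp_apply, Coalgebra.lTensor_counit_comul]

section QT

variable {ι : Type*} [Fintype ι] (α β : ι → H)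

lemma AA_rT : LinearMap.rTensor H (Coalgebra.comul (R := k)) (∑ i, α i ⊗ₜ[k] β i)
    = ∑ i, (Δ (α i)) ⊗ₜ[k] β i := by
  rw [map_sum]; simp only [rTensor_tmul]

lemma AA_lT : LinearMap.lTensor H (Coalgebra.comul (R := k)) (∑ i, α i ⊗ₜ[k] β i)
    = ∑ i, α i ⊗ₜ[k] (Δ (β i)) := by
  rw [map_sum]; simp only [lTensor_tmul]

lemma hqt2'
    (hqt2 : LinearMap.rTensor H (Coalgebra.comul (R := k)) (∑ i, α i ⊗ₜ[k] β i)
        = (∑ i, (α i ⊗ₜ[k] (1 : H)) ⊗ₜ[k] β i) * (∑ i, ((1 : H) ⊗ₜ[k] α i) ⊗ₜ[k] β i)) :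
    ∑ i, (Δ (α i)) ⊗ₜ[k] β i
      = ∑ i, ∑ j, (α i ⊗ₜ[k] α j) ⊗ₜ[k] (β i * β j) := by
  rw [← AA_rT, hqt2, Finset.sum_mul_sum]
  simp only [Algebra.TensorProduct.tmul_mul_tmul, one_mul, mul_one]

lemma hqt3'
    (hqt3 : LinearMap.lTensor H (Coalgebra.comul (R := k)) (∑ i, α i ⊗ₜ[k] β i)
        = (∑ i, α i ⊗ₜ[k] ((1 : H) ⊗ₜ[k] β i)) * (∑ i, α i ⊗ₜ[k] (β i ⊗ₜ[k] (1 : H)))) :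
    ∑ i, α i ⊗ₜ[k] (Δ (β i))
      = ∑ i, ∑ j, (α i * α j) ⊗ₜ[k] (β j ⊗ₜ[k] β i) := by
  rw [← AA_lT, hqt3, Finset.sum_mul_sum]
  simp only [Algebra.TensorProduct.tmul_mul_tmul, one_mul, mul_one]

variable (R' : H ⊗[k] H)

/-- `(ε ⊗ id) R = 1`. -/
lemma u0_eq_one
    (hinv1 : (∑ i, α i ⊗ₜ[k] β i) * R' = 1)
    (hqt2 : LinearMap.rTensor H (Coalgebra.comul (R := k)) (∑ i, α i ⊗ₜ[k] β i)
        = (∑ i, (α i ⊗ₜ[k] (1 : H)) ⊗ₜ[k] β i) * (∑ i, ((1 : H) ⊗ₜ[k] α i) ⊗ₜ[k] β i)) :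
    ∑ i, ε (α i) • β i = (1 : H) := by
  classical
  have h := congrArg (LinearMap.rTensor H (epsL (k := k) (H := H))) (hqt2' α β hqt2)
  simp only [map_sum, rTensor_tmul, epsL_comul, epsL_tmul] at h
  -- h : ∑ i, α i ⊗ β i = ∑ i, ∑ j, (ε (α i) • α j) ⊗ (β i * β j)
  have h2 : ∑ i, ∑ j, ((ε (α i) • α j) ⊗ₜ[k] (β i * β j))
      = ((1:H) ⊗ₜ[k] (∑ i, ε (α i) • β i)) * (∑ i, α i ⊗ₜ[k] β i) := by
    rw [Finset.sum_comm]
    rw [Finset.mul_sum]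
    refine Finset.sum_congr rfl fun j _ => ?_
    rw [Algebra.TensorProduct.tmul_mul_tmul, one_mul, Finset.sum_mul, TensorProduct.tmul_sum]
    refine Finset.sum_congr rfl fun i _ => ?_
    simp only [smul_mul_assoc, TensorProduct.smul_tmul, TensorProduct.tmul_smul]
  rw [h2] at h
  -- h : AA = (1 ⊗ u0) * AA
  have h3 : (1:H) ⊗ₜ[k] (∑ i, ε (α i) • β i) = 1 := by
    calc (1:H) ⊗ₜ[k] (∑ i, ε (α i) • β i)
        = ((1:H) ⊗ₜ[k] (∑ i, ε (α i) • β i)) * ((∑ i, α i ⊗ₜ[k] β i) * R') := by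
          rw [hinv1, mul_one]
      _ = ((∑ i, α i ⊗ₜ[k] β i)) * R' := by rw [← mul_assoc, ← h]
      _ = 1 := hinv1
  have h4 := congrArg (mulH k H) h3
  rw [Algebra.TensorProduct.one_def] at h4
  simpa [mulH, mul'_apply] using h4

/-- `(id ⊗ ε) R = 1`. -/
lemma v0_eq_one
    (hinv1 : (∑ i, α i ⊗ₜ[k] β i) * R' = 1)
    (hqt3 : LinearMap.lTensor H (Coalgebra.comul (R := k)) (∑ i, α i ⊗ₜ[k] β i)
        = (∑ i, α i ⊗ₜ[k] ((1 : H) ⊗ₜ[k] β i)) * (∑ i, α i ⊗ₜ[k] (β i ⊗ₜ[k] (1 : H)))) :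
    ∑ i, ε (β i) • α i = (1 : H) := by
  classical
  have h := congrArg (LinearMap.lTensor H (epsR (k := k) (H := H))) (hqt3' α β hqt3)
  simp only [map_sum, lTensor_tmul, epsR_comul, epsR_tmul] at h
  have h2 : ∑ i, ∑ j, ((α i * α j) ⊗ₜ[k] (ε (β i) • β j))
      = ((∑ i, ε (β i) • α i) ⊗ₜ[k] (1:H)) * (∑ i, α i ⊗ₜ[k] β i) := by
    rw [Finset.sum_comm]
    rw [Finset.mul_sum]
    refine Finset.sum_congr rfl fun j _ => ?_
    rw [Algebra.TensorProduct.tmul_mul_tmul, one_mul, Finset.sum_mul, TensorProduct.sum_tmul]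
    refine Finset.sum_congr rfl fun i _ => ?_
    simp only [smul_mul_assoc, TensorProduct.smul_tmul, TensorProduct.tmul_smul]
  rw [h2] at h
  have h3 : (∑ i, ε (β i) • α i) ⊗ₜ[k] (1:H) = 1 := by
    calc (∑ i, ε (β i) • α i) ⊗ₜ[k] (1:H)
        = ((∑ i, ε (β i) • α i) ⊗ₜ[k] (1:H)) * ((∑ i, α i ⊗ₜ[k] β i) * R') := by
          rw [hinv1, mul_one]
      _ = ((∑ i, α i ⊗ₜ[k] β i)) * R' := by rw [← mul_assoc, ← h]
      _ = 1 := hinv1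
  have h4 := congrArg (mulH k H) h3
  rw [Algebra.TensorProduct.one_def] at h4
  simpa [mulH, mul'_apply] using h4

lemma aS_eq : aS k H = HopfAlgebra.antipode (R := k) := rfl

/-- `Σᵢⱼ αᵢαⱼ ⊗ S(βⱼ)βᵢ = 1`. -/
lemma magicA0
    (hinv1 : (∑ i, α i ⊗ₜ[k] β i) * R' = 1)
    (hqt3 : LinearMap.lTensor H (Coalgebra.comul (R := k)) (∑ i, α i ⊗ₜ[k] β i)
        = (∑ i, α i ⊗ₜ[k] ((1 : H) ⊗ₜ[k] β i)) * (∑ i, α i ⊗ₜ[k] (β i ⊗ₜ[k] (1 : H)))) :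
    ∑ i, ∑ j, (α i * α j) ⊗ₜ[k] (S (β j) * β i) = (1 : H ⊗[k] H) := by
  classical
  have h := congrArg (LinearMap.lTensor H
    (LinearMap.mul' k H ∘ₗ LinearMap.rTensor H (aS k H))) (hqt3' α β hqt3)
  simp only [map_sum, lTensor_tmul, comp_apply, rTensor_tmul, mul'_apply] at h
  rw [aS_eq] at h
  simp only [HopfAlgebra.mul_antipode_rTensor_comul_apply,
    Algebra.algebraMap_eq_smul_one] at h
  rw [← aS_eq] at h
  rw [← h]
  calc ∑ i, α i ⊗ₜ[k] (ε (β i) • (1:H))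
      = (∑ i, ε (β i) • α i) ⊗ₜ[k] (1:H) := by
        rw [TensorProduct.sum_tmul]
        exact Finset.sum_congr rfl fun i _ => by
          rw [TensorProduct.tmul_smul, TensorProduct.smul_tmul']
    _ = 1 := by rw [v0_eq_one α β R' hinv1 hqt3, Algebra.TensorProduct.one_def]

/-- `Σᵢⱼ αᵢαⱼ ⊗ βⱼ S(βᵢ) = 1`. -/
lemma T5
    (hinv1 : (∑ i, α i ⊗ₜ[k] β i) * R' = 1)
    (hqt3 : LinearMap.lTensor H (Coalgebra.comul (R := k)) (∑ i, α i ⊗ₜ[k] β i)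
        = (∑ i, α i ⊗ₜ[k] ((1 : H) ⊗ₜ[k] β i)) * (∑ i, α i ⊗ₜ[k] (β i ⊗ₜ[k] (1 : H)))) :
    ∑ i, ∑ j, (α i * α j) ⊗ₜ[k] (β j * S (β i)) = (1 : H ⊗[k] H) := by
  classical
  have h := congrArg (LinearMap.lTensor H
    (LinearMap.mul' k H ∘ₗ LinearMap.lTensor H (aS k H))) (hqt3' α β hqt3)
  simp only [map_sum, lTensor_tmul, comp_apply, mul'_apply] at h
  rw [aS_eq] at h
  simp only [HopfAlgebra.mul_antipode_lTensor_comul_apply,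
    Algebra.algebraMap_eq_smul_one] at h
  rw [← aS_eq] at h
  rw [← h]
  calc ∑ i, α i ⊗ₜ[k] (ε (β i) • (1:H))
      = (∑ i, ε (β i) • α i) ⊗ₜ[k] (1:H) := by
        rw [TensorProduct.sum_tmul]
        exact Finset.sum_congr rfl fun i _ => by
          rw [TensorProduct.tmul_smul, TensorProduct.smul_tmul']
    _ = 1 := by rw [v0_eq_one α β R' hinv1 hqt3, Algebra.TensorProduct.one_def]

/-- `Σᵢⱼ S(αᵢ)αⱼ ⊗ βᵢβⱼ = 1`. -/
lemma T2
    (hinv1 : (∑ i, α i ⊗ₜ[k] β i) * R' = 1)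
    (hqt2 : LinearMap.rTensor H (Coalgebra.comul (R := k)) (∑ i, α i ⊗ₜ[k] β i)
        = (∑ i, (α i ⊗ₜ[k] (1 : H)) ⊗ₜ[k] β i) * (∑ i, ((1 : H) ⊗ₜ[k] α i) ⊗ₜ[k] β i)) :
    ∑ i, ∑ j, (S (α i) * α j) ⊗ₜ[k] (β i * β j) = (1 : H ⊗[k] H) := by
  classical
  have h := congrArg (LinearMap.rTensor H
    (LinearMap.mul' k H ∘ₗ LinearMap.rTensor H (aS k H))) (hqt2' α β hqt2)
  simp only [map_sum, rTensor_tmul, comp_apply, mul'_apply] at h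
  rw [aS_eq] at h
  simp only [HopfAlgebra.mul_antipode_rTensor_comul_apply,
    Algebra.algebraMap_eq_smul_one] at h
  rw [← aS_eq] at h
  rw [← h]
  calc ∑ i, (ε (α i) • (1:H)) ⊗ₜ[k] β i
      = (1:H) ⊗ₜ[k] (∑ i, ε (α i) • β i) := by
        rw [TensorProduct.tmul_sum]
        exact Finset.sum_congr rfl fun i _ => by
          rw [TensorProduct.smul_tmul]
    _ = 1 := by rw [u0_eq_one α β R' hinv1 hqt2, Algebra.TensorProduct.one_def]

/-- `Σᵢⱼ βⱼ S(βᵢ) (αᵢ αⱼ) = 1` (in `H`). -/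
lemma E9
    (hinv1 : (∑ i, α i ⊗ₜ[k] β i) * R' = 1)
    (hqt3 : LinearMap.lTensor H (Coalgebra.comul (R := k)) (∑ i, α i ⊗ₜ[k] β i)
        = (∑ i, α i ⊗ₜ[k] ((1 : H) ⊗ₜ[k] β i)) * (∑ i, α i ⊗ₜ[k] (β i ⊗ₜ[k] (1 : H)))) :
    ∑ i, ∑ j, β j * S (β i) * (α i * α j) = (1 : H) := by
  classical
  have h := congrArg (LinearMap.mul' k H ∘ₗ (TensorProduct.comm k H H).toLinearMap ∘ₗ
    LinearMap.lTensor H (LinearMap.mul' k H ∘ₗ LinearMap.lTensor H (aS k H)))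
    (hqt3' α β hqt3)
  simp only [map_sum, comp_apply, lTensor_tmul, mul'_apply, LinearEquiv.coe_coe,
    TensorProduct.comm_tmul] at h
  rw [aS_eq] at h
  simp only [HopfAlgebra.mul_antipode_lTensor_comul_apply,
    Algebra.algebraMap_eq_smul_one, smul_mul_assoc, one_mul] at h
  rw [← aS_eq] at h
  rw [← h, v0_eq_one α β R' hinv1 hqt3]

/-- `R' = (S ⊗ id) R`. -/
lemma ArEq
    (hinv1 : (∑ i, α i ⊗ₜ[k] β i) * R' = 1)
    (hinv2 : R' * (∑ i, α i ⊗ₜ[k] β i) = 1)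
    (hqt2 : LinearMap.rTensor H (Coalgebra.comul (R := k)) (∑ i, α i ⊗ₜ[k] β i)
        = (∑ i, (α i ⊗ₜ[k] (1 : H)) ⊗ₜ[k] β i) * (∑ i, ((1 : H) ⊗ₜ[k] α i) ⊗ₜ[k] β i)) :
    R' = ∑ i, S (α i) ⊗ₜ[k] β i := by
  classical
  have hA'A : (∑ i, S (α i) ⊗ₜ[k] β i) * (∑ i, α i ⊗ₜ[k] β i) = 1 := by
    rw [Finset.sum_mul_sum]
    simp only [Algebra.TensorProduct.tmul_mul_tmul]
    exact T2 α β R' hinv1 hqt2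
  calc R' = 1 * R' := (one_mul R').symm
    _ = ((∑ i, S (α i) ⊗ₜ[k] β i) * (∑ i, α i ⊗ₜ[k] β i)) * R' := by rw [hA'A]
    _ = (∑ i, S (α i) ⊗ₜ[k] β i) * ((∑ i, α i ⊗ₜ[k] β i) * R') := mul_assoc _ _ _
    _ = ∑ i, S (α i) ⊗ₜ[k] β i := by rw [hinv1, mul_one]

/-- `(S ⊗ S) R = R`. -/
lemma T8
    (hinv1 : (∑ i, α i ⊗ₜ[k] β i) * R' = 1)
    (hinv2 : R' * (∑ i, α i ⊗ₜ[k] β i) = 1)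
    (hqt2 : LinearMap.rTensor H (Coalgebra.comul (R := k)) (∑ i, α i ⊗ₜ[k] β i)
        = (∑ i, (α i ⊗ₜ[k] (1 : H)) ⊗ₜ[k] β i) * (∑ i, ((1 : H) ⊗ₜ[k] α i) ⊗ₜ[k] β i))
    (hqt3 : LinearMap.lTensor H (Coalgebra.comul (R := k)) (∑ i, α i ⊗ₜ[k] β i)
        = (∑ i, α i ⊗ₜ[k] ((1 : H) ⊗ₜ[k] β i)) * (∑ i, α i ⊗ₜ[k] (β i ⊗ₜ[k] (1 : H)))) :
    ∑ i, S (α i) ⊗ₜ[k] S (β i) = ∑ i, α i ⊗ₜ[k] β i := by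
  classical
  have h := congrArg (LinearMap.rTensor H (aS k H)) (T5 α β R' hinv1 hqt3)
  simp only [map_sum, rTensor_tmul] at h
  rw [show LinearMap.rTensor H (aS k H) (1 : H ⊗[k] H) = 1 by
    rw [Algebra.TensorProduct.one_def, rTensor_tmul, aS_one]] at h
  have hA'B : (∑ i, S (α i) ⊗ₜ[k] β i) * (∑ i, S (α i) ⊗ₜ[k] S (β i)) = 1 := by
    rw [Finset.sum_mul_sum]
    simp only [Algebra.TensorProduct.tmul_mul_tmul]
    rw [← h, Finset.sum_comm]
    exact Finset.sum_congr rfl fun i _ => Finset.sum_congr rfl fun j _ => by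
      rw [aS_mul]
  calc ∑ i, S (α i) ⊗ₜ[k] S (β i)
      = ((∑ i, α i ⊗ₜ[k] β i) * R') * (∑ i, S (α i) ⊗ₜ[k] S (β i)) := by
        rw [hinv1, one_mul]
    _ = (∑ i, α i ⊗ₜ[k] β i) * (R' * (∑ i, S (α i) ⊗ₜ[k] S (β i))) := mul_assoc _ _ _
    _ = (∑ i, α i ⊗ₜ[k] β i) * ((∑ i, S (α i) ⊗ₜ[k] β i) * (∑ i, S (α i) ⊗ₜ[k] S (β i))) := by
        rw [← ArEq α β R' hinv1 hinv2 hqt2]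
    _ = ∑ i, α i ⊗ₜ[k] β i := by rw [hA'B, mul_one]

variable (k) in
/-- Drinfeld element `u = Σ S(βᵢ) αᵢ`. -/
noncomputable def uu : H := ∑ i, S (β i) * α i

variable (k) in
/-- `ū = Σ βᵢ S²(αᵢ)`. -/
noncomputable def ubar : H := ∑ i, β i * S (S (α i))

lemma qtA
    (hinv2 : R' * (∑ i, α i ⊗ₜ[k] β i) = 1)
    (hqt1 : ∀ x : H, (∑ i, α i ⊗ₜ[k] β i) * Coalgebra.comul (R := k) x * R'
        = TensorProduct.comm k H H (Coalgebra.comul (R := k) x))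
    (x : H) :
    (∑ i, α i ⊗ₜ[k] β i) * Δ x
      = (TensorProduct.comm k H H (Δ x)) * (∑ i, α i ⊗ₜ[k] β i) := by
  calc (∑ i, α i ⊗ₜ[k] β i) * Δ x
      = (∑ i, α i ⊗ₜ[k] β i) * Δ x * (R' * (∑ i, α i ⊗ₜ[k] β i)) := by rw [hinv2, mul_one]
    _ = ((∑ i, α i ⊗ₜ[k] β i) * Δ x * R') * (∑ i, α i ⊗ₜ[k] β i) := by
        rw [mul_assoc, mul_assoc, mul_assoc]
    _ = (TensorProduct.comm k H H (Δ x)) * (∑ i, α i ⊗ₜ[k] β i) := by rw [hqt1 x]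

lemma spade
    (hinv2 : R' * (∑ i, α i ⊗ₜ[k] β i) = 1)
    (hqt1 : ∀ x : H, (∑ i, α i ⊗ₜ[k] β i) * Coalgebra.comul (R := k) x * R'
        = TensorProduct.comm k H H (Coalgebra.comul (R := k) x))
    (x : H) (r : Coalgebra.Repr k x (H × H)) :
    ∑ n ∈ r.index, S (r.right n) * uu k α β * r.left n = ε x • uu k α β := by
  classical
  have hq := qtA α β R' hinv2 hqt1 x
  rw [← r.eq, map_sum, Finset.sum_mul_sum, Finset.sum_mul_sum] at hq
  simp only [Algebra.TensorProduct.tmul_mul_tmul, TensorProduct.comm_tmul] at hq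
  -- hq : Σ i Σ n (αᵢ fₙ) ⊗ (βᵢ gₙ) = Σ n Σ i (gₙ αᵢ) ⊗ (fₙ βᵢ)
  have h := congrArg (LinearMap.mul' k H ∘ₗ LinearMap.rTensor H (aS k H) ∘ₗ
    (TensorProduct.comm k H H).toLinearMap) hq
  simp only [map_sum, comp_apply, LinearEquiv.coe_coe, TensorProduct.comm_tmul,
    rTensor_tmul, mul'_apply] at h
  -- h : Σ i Σ n S(βᵢ gₙ) * (αᵢ fₙ) = Σ n Σ i S(fₙ βᵢ) * (gₙ αᵢ)
  have hL : ∑ i : ι, ∑ n ∈ r.index, S (β i * r.right n) * (α i * r.left n)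
      = ∑ n ∈ r.index, S (r.right n) * uu k α β * r.left n := by
    rw [Finset.sum_comm]
    refine Finset.sum_congr rfl fun n _ => ?_
    rw [uu, Finset.mul_sum, Finset.sum_mul]
    refine Finset.sum_congr rfl fun i _ => ?_
    rw [aS_mul]
    noncomm_ring
  have hR : ∑ n ∈ r.index, ∑ i : ι, S (r.left n * β i) * (r.right n * α i)
      = ε x • uu k α β := by
    rw [Finset.sum_comm]
    have inner : ∀ i : ι, ∑ n ∈ r.index, S (r.left n * β i) * (r.right n * α i)
        = S (β i) * (ε x • (1:H)) * α i := by
      intro i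
      rw [← sum_aS_mul x r, Finset.mul_sum, Finset.sum_mul]
      refine Finset.sum_congr rfl fun n _ => ?_
      rw [aS_mul]
      noncomm_ring
    rw [Finset.sum_congr rfl (fun i _ => inner i), uu, Finset.smul_sum]
    refine Finset.sum_congr rfl fun i _ => ?_
    rw [mul_smul_comm, smul_mul_assoc, mul_one]
  rw [hL] at h
  rw [h, hR]

/-- `u x = S²(x) u`. -/
lemma U2
    (hinv2 : R' * (∑ i, α i ⊗ₜ[k] β i) = 1)
    (hqt1 : ∀ x : H, (∑ i, α i ⊗ₜ[k] β i) * Coalgebra.comul (R := k) x * R'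
        = TensorProduct.comm k H H (Coalgebra.comul (R := k) x))
    (x : H) :
    uu k α β * x = S (S x) * uu k α β := by
  classical
  set r := Coalgebra.Repr.arbitrary k x with hr
  set r2 : ∀ n : r.ι, Coalgebra.Repr k (r.left n) (H × H) :=
    fun n => Coalgebra.Repr.arbitrary k (r.left n) with hr2
  set r2' : ∀ n : r.ι, Coalgebra.Repr k (r.right n) (H × H) :=
    fun n => Coalgebra.Repr.arbitrary k (r.right n) with hr2'
  -- Claim C : Σ x₁ ⊗ (x₂ S(x₃)) = x ⊗ 1
  have hC : ∑ n ∈ r.index, ∑ p ∈ (r2 n).index,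
      ((r2 n).left p ⊗ₜ[k] ((r2 n).right p * S (r.right n))) = x ⊗ₜ[k] (1 : H) := by
    have h := Coalgebra.sum_tmul_tmul_eq r r2 r2'
    have h2 := congrArg (LinearMap.lTensor H (LinearMap.mul' k H ∘ₗ
      LinearMap.lTensor H (aS k H))) h
    simp only [map_sum, lTensor_tmul, comp_apply, mul'_apply] at h2
    rw [h2]
    have inner : ∀ n ∈ r.index, ∑ q ∈ (r2' n).index,
        r.left n ⊗ₜ[k] ((r2' n).left q * S ((r2' n).right q))
        = ε (r.right n) • (r.left n ⊗ₜ[k] (1 : H)) := by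
      intro n _
      rw [← TensorProduct.tmul_sum, sum_mul_aS _ (r2' n), TensorProduct.tmul_smul]
    rw [Finset.sum_congr rfl inner]
    calc ∑ n ∈ r.index, ε (r.right n) • (r.left n ⊗ₜ[k] (1:H))
        = (∑ n ∈ r.index, ε (r.right n) • r.left n) ⊗ₜ[k] (1:H) := by
          rw [TensorProduct.sum_tmul]
          exact Finset.sum_congr rfl fun n _ => (TensorProduct.smul_tmul' _ _ _)
      _ = x ⊗ₜ[k] 1 := by rw [counit_right' x r]
  -- now apply Φ(a⊗b) = S(b) * u * a to C
  have hPhi := congrArg (LinearMap.mul' k H ∘ₗ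
    LinearMap.rTensor H (LinearMap.mulRight k (uu k α β) ∘ₗ aS k H) ∘ₗ
    (TensorProduct.comm k H H).toLinearMap) hC
  simp only [map_sum, comp_apply, LinearEquiv.coe_coe, TensorProduct.comm_tmul,
    rTensor_tmul, mul'_apply, LinearMap.mulRight_apply] at hPhi
  -- hPhi : Σₙₚ S(x₂ S(x₃)) * u * x₁ = S(1) * u * x
  rw [aS_one, one_mul] at hPhi
  -- now compute the LHS of hPhi as S(S x) * u
  have hexp : ∑ n ∈ r.index, ∑ p ∈ (r2 n).index,
      S ((r2 n).right p * S (r.right n)) * uu k α β * (r2 n).left p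
      = S (S x) * uu k α β := by
    have e1 : ∀ n ∈ r.index, ∑ p ∈ (r2 n).index,
        S ((r2 n).right p * S (r.right n)) * uu k α β * (r2 n).left p
        = S (S (r.right n)) * (ε (r.left n) • uu k α β) := by
      intro n _
      rw [← spade α β R' hinv2 hqt1 (r.left n) (r2 n), Finset.mul_sum]
      refine Finset.sum_congr rfl fun p _ => ?_
      rw [aS_mul]
      noncomm_ring
    rw [Finset.sum_congr rfl e1]
    calc ∑ n ∈ r.index, S (S (r.right n)) * (ε (r.left n) • uu k α β)
        = ∑ n ∈ r.index, (S (S (ε (r.left n) • r.right n))) * uu k α β := by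
          refine Finset.sum_congr rfl fun n _ => ?_
          rw [map_smul, map_smul, smul_mul_assoc, mul_smul_comm]
      _ = S (S x) * uu k α β := by
          rw [← Finset.sum_mul, ← map_sum, ← map_sum, counit_left' x r]
  rw [hexp] at hPhi
  exact hPhi.symm

lemma invu1
    (hinv1 : (∑ i, α i ⊗ₜ[k] β i) * R' = 1)
    (hinv2 : R' * (∑ i, α i ⊗ₜ[k] β i) = 1)
    (hqt1 : ∀ x : H, (∑ i, α i ⊗ₜ[k] β i) * Coalgebra.comul (R := k) x * R'
        = TensorProduct.comm k H H (Coalgebra.comul (R := k) x))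
    (hqt3 : LinearMap.lTensor H (Coalgebra.comul (R := k)) (∑ i, α i ⊗ₜ[k] β i)
        = (∑ i, α i ⊗ₜ[k] ((1 : H) ⊗ₜ[k] β i)) * (∑ i, α i ⊗ₜ[k] (β i ⊗ₜ[k] (1 : H)))) :
    ubar k α β * uu k α β = 1 := by
  classical
  calc ubar k α β * uu k α β
      = ∑ i, β i * (S (S (α i)) * uu k α β) := by
        rw [ubar, Finset.sum_mul]
        exact Finset.sum_congr rfl fun i _ => by rw [mul_assoc]
    _ = ∑ i, β i * (uu k α β * α i) := by
        exact Finset.sum_congr rfl fun i _ => by rw [← U2 α β R' hinv2 hqt1 (α i)]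
    _ = ∑ i, ∑ j, β i * S (β j) * (α j * α i) := by
        refine Finset.sum_congr rfl fun i _ => ?_
        rw [uu, Finset.sum_mul, Finset.mul_sum]
        exact Finset.sum_congr rfl fun j _ => by noncomm_ring
    _ = 1 := by
        rw [Finset.sum_comm]
        exact E9 α β R' hinv1 hqt3

lemma ubar_S4
    (hinv1 : (∑ i, α i ⊗ₜ[k] β i) * R' = 1)
    (hinv2 : R' * (∑ i, α i ⊗ₜ[k] β i) = 1)
    (hqt2 : LinearMap.rTensor H (Coalgebra.comul (R := k)) (∑ i, α i ⊗ₜ[k] β i)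
        = (∑ i, (α i ⊗ₜ[k] (1 : H)) ⊗ₜ[k] β i) * (∑ i, ((1 : H) ⊗ₜ[k] α i) ⊗ₜ[k] β i))
    (hqt3 : LinearMap.lTensor H (Coalgebra.comul (R := k)) (∑ i, α i ⊗ₜ[k] β i)
        = (∑ i, α i ⊗ₜ[k] ((1 : H) ⊗ₜ[k] β i)) * (∑ i, α i ⊗ₜ[k] (β i ⊗ₜ[k] (1 : H)))) :
    ∑ i, S (S (β i)) * S (S (S (S (α i)))) = ubar k α β := by
  classical
  have hsq := congrArg (TensorProduct.map (aS k H) (aS k H))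
    (T8 α β R' hinv1 hinv2 hqt2 hqt3)
  simp only [map_sum, TensorProduct.map_tmul] at hsq
  rw [T8 α β R' hinv1 hinv2 hqt2 hqt3] at hsq
  have h := congrArg (LinearMap.mul' k H ∘ₗ (TensorProduct.comm k H H).toLinearMap ∘ₗ
    LinearMap.rTensor H (aS k H ∘ₗ aS k H)) hsq
  simp only [map_sum, comp_apply, LinearEquiv.coe_coe, TensorProduct.comm_tmul,
    rTensor_tmul, mul'_apply] at h
  rw [h, ubar]

lemma invu2
    (hinv1 : (∑ i, α i ⊗ₜ[k] β i) * R' = 1)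
    (hinv2 : R' * (∑ i, α i ⊗ₜ[k] β i) = 1)
    (hqt1 : ∀ x : H, (∑ i, α i ⊗ₜ[k] β i) * Coalgebra.comul (R := k) x * R'
        = TensorProduct.comm k H H (Coalgebra.comul (R := k) x))
    (hqt2 : LinearMap.rTensor H (Coalgebra.comul (R := k)) (∑ i, α i ⊗ₜ[k] β i)
        = (∑ i, (α i ⊗ₜ[k] (1 : H)) ⊗ₜ[k] β i) * (∑ i, ((1 : H) ⊗ₜ[k] α i) ⊗ₜ[k] β i))
    (hqt3 : LinearMap.lTensor H (Coalgebra.comul (R := k)) (∑ i, α i ⊗ₜ[k] β i)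
        = (∑ i, α i ⊗ₜ[k] ((1 : H) ⊗ₜ[k] β i)) * (∑ i, α i ⊗ₜ[k] (β i ⊗ₜ[k] (1 : H)))) :
    uu k α β * ubar k α β = 1 := by
  classical
  calc uu k α β * ubar k α β
      = ∑ i, uu k α β * β i * S (S (α i)) := by
        rw [ubar, Finset.mul_sum]
        exact Finset.sum_congr rfl fun i _ => by rw [mul_assoc]
    _ = ∑ i, S (S (β i)) * (uu k α β * S (S (α i))) := by
        exact Finset.sum_congr rfl fun i _ => by
          rw [U2 α β R' hinv2 hqt1 (β i)]; noncomm_ring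
    _ = ∑ i, S (S (β i)) * S (S (S (S (α i)))) * uu k α β := by
        exact Finset.sum_congr rfl fun i _ => by
          rw [U2 α β R' hinv2 hqt1 (S (S (α i)))]; noncomm_ring
    _ = ubar k α β * uu k α β := by
        rw [← Finset.sum_mul, ubar_S4 α β R' hinv1 hinv2 hqt2 hqt3]
    _ = 1 := invu1 α β R' hinv1 hinv2 hqt1 hqt3

lemma Ubar2
    (hinv1 : (∑ i, α i ⊗ₜ[k] β i) * R' = 1)
    (hinv2 : R' * (∑ i, α i ⊗ₜ[k] β i) = 1)
    (hqt1 : ∀ x : H, (∑ i, α i ⊗ₜ[k] β i) * Coalgebra.comul (R := k) x * R'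
        = TensorProduct.comm k H H (Coalgebra.comul (R := k) x))
    (hqt2 : LinearMap.rTensor H (Coalgebra.comul (R := k)) (∑ i, α i ⊗ₜ[k] β i)
        = (∑ i, (α i ⊗ₜ[k] (1 : H)) ⊗ₜ[k] β i) * (∑ i, ((1 : H) ⊗ₜ[k] α i) ⊗ₜ[k] β i))
    (hqt3 : LinearMap.lTensor H (Coalgebra.comul (R := k)) (∑ i, α i ⊗ₜ[k] β i)
        = (∑ i, α i ⊗ₜ[k] ((1 : H) ⊗ₜ[k] β i)) * (∑ i, α i ⊗ₜ[k] (β i ⊗ₜ[k] (1 : H)))) 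
    (x : H) :
    ubar k α β * S (S x) = x * ubar k α β := by
  calc ubar k α β * S (S x)
      = ubar k α β * S (S x) * (uu k α β * ubar k α β) := by
        rw [invu2 α β R' hinv1 hinv2 hqt1 hqt2 hqt3, mul_one]
    _ = ubar k α β * (S (S x) * uu k α β) * ubar k α β := by noncomm_ring
    _ = ubar k α β * (uu k α β * x) * ubar k α β := by
        rw [← U2 α β R' hinv2 hqt1 x]
    _ = (ubar k α β * uu k α β) * (x * ubar k α β) := by noncomm_ring
    _ = x * ubar k α β := by
        rw [invu1 α β R' hinv1 hinv2 hqt1 hqt3, one_mul]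

lemma SB_apply (b : H) : SB k H α β b = ∑ j, β j * S (adT k H (α j ⊗ₜ[k] b)) := by
  rw [SB, LinearMap.sum_apply]
  exact Finset.sum_congr rfl fun j _ => by
    simp only [comp_apply, LinearMap.mulLeft_apply, adL, TensorProduct.mk_apply]

lemma DeltaB_repr (y : H) (r : Coalgebra.Repr k y (H × H)) :
    DeltaB k H α β y = ∑ i, ∑ n ∈ r.index,
      (r.left n * S (β i)) ⊗ₜ[k] (adT k H (α i ⊗ₜ[k] r.right n)) := by
  rw [DeltaB, LinearMap.sum_apply]
  refine Finset.sum_congr rfl fun i _ => ?_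
  rw [comp_apply, ← r.eq, map_sum]
  exact Finset.sum_congr rfl fun n _ => by
    simp only [TensorProduct.map_tmul, LinearMap.mulRight_apply, adL, LinearMap.comp_apply,
      TensorProduct.mk_apply]

/-- `S̲(b) = Σⱼ βⱼ (ū (S(b) S(αⱼ)))`. -/
lemma SBform
    (hinv1 : (∑ i, α i ⊗ₜ[k] β i) * R' = 1)
    (hinv2 : R' * (∑ i, α i ⊗ₜ[k] β i) = 1)
    (hqt2 : LinearMap.rTensor H (Coalgebra.comul (R := k)) (∑ i, α i ⊗ₜ[k] β i)
        = (∑ i, (α i ⊗ₜ[k] (1 : H)) ⊗ₜ[k] β i) * (∑ i, ((1 : H) ⊗ₜ[k] α i) ⊗ₜ[k] β i))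
    (b : H) :
    SB k H α β b = ∑ j, β j * (ubar k α β * (S b * S (α j))) := by
  classical
  have hXi := congrArg (LinearMap.mul' k H ∘ₗ (TensorProduct.comm k H H).toLinearMap ∘ₗ
    LinearMap.rTensor H (aS k H ∘ₗ act0 ∘ₗ (TensorProduct.mk k (H ⊗[k] H) H).flip b))
    (hqt2' α β hqt2)
  simp only [map_sum, comp_apply, LinearEquiv.coe_coe, TensorProduct.comm_tmul,
    rTensor_tmul, mul'_apply, LinearMap.flip_apply, TensorProduct.mk_apply] at hXi
  rw [SB_apply α β b]
  calc ∑ j, β j * S (adT k H (α j ⊗ₜ[k] b))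
      = ∑ j, β j * S (act0 ((Δ (α j)) ⊗ₜ[k] b)) := by
        exact Finset.sum_congr rfl fun j _ => by rw [adT_apply_tmul]
    _ = ∑ j, ∑ l, (β j * β l) * S (act0 ((α j ⊗ₜ[k] α l) ⊗ₜ[k] b)) := hXi
    _ = ∑ j, β j * (ubar k α β * (S b * S (α j))) := by
        refine Finset.sum_congr rfl fun j _ => ?_
        rw [ubar, Finset.sum_mul, Finset.mul_sum]
        refine Finset.sum_congr rfl fun l _ => ?_
        rw [act0_tmul, aS_mul, aS_mul]
        noncomm_ring
  
/-- `Σₗ βₗ ū S(αₗ) = 1`. -/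
lemma K1
    (hinv1 : (∑ i, α i ⊗ₜ[k] β i) * R' = 1)
    (hqt2 : LinearMap.rTensor H (Coalgebra.comul (R := k)) (∑ i, α i ⊗ₜ[k] β i)
        = (∑ i, (α i ⊗ₜ[k] (1 : H)) ⊗ₜ[k] β i) * (∑ i, ((1 : H) ⊗ₜ[k] α i) ⊗ₜ[k] β i)) :
    ∑ l, β l * (ubar k α β * S (α l)) = 1 := by
  classical
  have h := congrArg (LinearMap.mul' k H ∘ₗ (TensorProduct.comm k H H).toLinearMap ∘ₗ
    LinearMap.rTensor H (aS k H ∘ₗ LinearMap.mul' k H ∘ₗ LinearMap.lTensor H (aS k H)))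
    (hqt2' α β hqt2)
  simp only [map_sum, comp_apply, LinearEquiv.coe_coe, TensorProduct.comm_tmul,
    rTensor_tmul, mul'_apply, lTensor_tmul] at h
  -- LHS of h : Σⱼ βⱼ * S(mul'(lTensor aS (Δ αⱼ)))
  rw [aS_eq] at h
  simp only [HopfAlgebra.mul_antipode_lTensor_comul_apply] at h
  rw [← aS_eq] at h
  -- now LHS : Σⱼ βⱼ * S(algebraMap (ε αⱼ))
  have hL : ∑ j, β j * (aS k H) (algebraMap k H (ε (α j))) = 1 := by
    calc ∑ j, β j * (aS k H) (algebraMap k H (ε (α j)))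
        = ∑ j, ε (α j) • β j := by
          refine Finset.sum_congr rfl fun j _ => ?_
          rw [Algebra.algebraMap_eq_smul_one, map_smul, aS_one, mul_smul_comm, mul_one]
      _ = 1 := u0_eq_one α β R' hinv1 hqt2
  rw [hL] at h
  calc ∑ l, β l * (ubar k α β * S (α l))
      = ∑ j, ∑ l, β j * β l * S (α j * S (α l)) := by
        rw [ubar]
        refine Finset.sum_congr rfl fun j _ => ?_
        rw [Finset.sum_mul, Finset.mul_sum]
        refine Finset.sum_congr rfl fun l _ => ?_
        rw [aS_mul]
        noncomm_ring
    _ = 1 := h.symm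

lemma magicA
    (hinv1 : (∑ i, α i ⊗ₜ[k] β i) * R' = 1)
    (hqt3 : LinearMap.lTensor H (Coalgebra.comul (R := k)) (∑ i, α i ⊗ₜ[k] β i)
        = (∑ i, α i ⊗ₜ[k] ((1 : H) ⊗ₜ[k] β i)) * (∑ i, α i ⊗ₜ[k] (β i ⊗ₜ[k] (1 : H)))) :
    ∑ i, ∑ j, (α j * α i) ⊗ₜ[k] (S (β i) * β j) = (1 : H ⊗[k] H) := by
  have h := magicA0 α β R' hinv1 hqt3
  rw [Finset.sum_comm] at h
  exact h

/-- Goal A : `Σ y⟨1⟩ S̲(y⟨2⟩) = ε(y) 1`. -/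
lemma goalA
    (hinv1 : (∑ i, α i ⊗ₜ[k] β i) * R' = 1)
    (hqt3 : LinearMap.lTensor H (Coalgebra.comul (R := k)) (∑ i, α i ⊗ₜ[k] β i)
        = (∑ i, α i ⊗ₜ[k] ((1 : H) ⊗ₜ[k] β i)) * (∑ i, α i ⊗ₜ[k] (β i ⊗ₜ[k] (1 : H))))
    (y : H) :
    mulH k H (LinearMap.lTensor H (SB k H α β) (DeltaB k H α β y))
      = ε y • (1 : H) := by
  classical
  set r := Coalgebra.Repr.arbitrary k y with hry
  rw [DeltaB_repr α β y r]
  simp only [map_sum, lTensor_tmul, mulH_tmul]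
  rw [Finset.sum_comm]
  have key : ∀ n ∈ r.index, ∑ i : ι,
      (r.left n * S (β i)) * SB k H α β (adT k H (α i ⊗ₜ[k] r.right n))
      = r.left n * S (r.right n) := by
    intro n _
    have hP := congrArg (LinearMap.mulLeft k (r.left n) ∘ₗ LinearMap.mul' k H ∘ₗ
      LinearMap.lTensor H (aS k H ∘ₗ adT k H ∘ₗ (TensorProduct.mk k H H).flip (r.right n)) ∘ₗ
      (TensorProduct.comm k H H).toLinearMap) (magicA α β R' hinv1 hqt3)
    rw [Algebra.TensorProduct.one_def] at hP
    simp only [map_sum, comp_apply, LinearEquiv.coe_coe, TensorProduct.comm_tmul,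
      lTensor_tmul, mul'_apply, LinearMap.mulLeft_apply, LinearMap.flip_apply,
      TensorProduct.mk_apply] at hP
    calc ∑ i : ι, (r.left n * S (β i)) * SB k H α β (adT k H (α i ⊗ₜ[k] r.right n))
        = ∑ i : ι, ∑ j : ι,
            r.left n * ((S (β i) * β j) * S (adT k H ((α j * α i) ⊗ₜ[k] r.right n))) := by
          refine Finset.sum_congr rfl fun i _ => ?_
          rw [SB_apply, Finset.mul_sum]
          refine Finset.sum_congr rfl fun j _ => ?_
          rw [← adT_mul]
          noncomm_ring
      _ = r.left n * (1 * S (adT k H ((1:H) ⊗ₜ[k] r.right n))) := hP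
      _ = r.left n * S (r.right n) := by rw [adT_one_left, one_mul]
  rw [Finset.sum_congr rfl key, sum_mul_aS y r]

/-- Goal B : `Σ S̲(y⟨1⟩) y⟨2⟩ = ε(y) 1`. -/
lemma goalB
    (hinv1 : (∑ i, α i ⊗ₜ[k] β i) * R' = 1)
    (hinv2 : R' * (∑ i, α i ⊗ₜ[k] β i) = 1)
    (hqt1 : ∀ x : H, (∑ i, α i ⊗ₜ[k] β i) * Coalgebra.comul (R := k) x * R'
        = TensorProduct.comm k H H (Coalgebra.comul (R := k) x))
    (hqt2 : LinearMap.rTensor H (Coalgebra.comul (R := k)) (∑ i, α i ⊗ₜ[k] β i)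
        = (∑ i, (α i ⊗ₜ[k] (1 : H)) ⊗ₜ[k] β i) * (∑ i, ((1 : H) ⊗ₜ[k] α i) ⊗ₜ[k] β i))
    (hqt3 : LinearMap.lTensor H (Coalgebra.comul (R := k)) (∑ i, α i ⊗ₜ[k] β i)
        = (∑ i, α i ⊗ₜ[k] ((1 : H) ⊗ₜ[k] β i)) * (∑ i, α i ⊗ₜ[k] (β i ⊗ₜ[k] (1 : H))))
    (y : H) :
    mulH k H (LinearMap.rTensor H (SB k H α β) (DeltaB k H α β y))
      = ε y • (1 : H) := by
  classical
  set r := Coalgebra.Repr.arbitrary k y with hry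
  rw [DeltaB_repr α β y r]
  simp only [map_sum, rTensor_tmul, mulH_tmul]
  rw [Finset.sum_comm]
  -- Form0 : Σₙ Σᵢ SB (fₙ S(βᵢ)) * adT(αᵢ ⊗ gₙ)
  have step1 : ∀ n ∈ r.index, ∀ i : ι,
      SB k H α β (r.left n * S (β i)) * adT k H (α i ⊗ₜ[k] r.right n)
      = ∑ j, (β j * ((β i * ubar k α β) * (S (r.left n) * S (α j))))
          * adT k H (α i ⊗ₜ[k] r.right n) := by
    intro n _ i
    rw [SBform α β R' hinv1 hinv2 hqt2, Finset.sum_mul]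
    refine Finset.sum_congr rfl fun j _ => ?_
    rw [aS_mul]
    have hu : ubar k α β * (S (S (β i)) * S (r.left n) * S (α j))
        = (β i * ubar k α β) * (S (r.left n) * S (α j)) := by
      rw [show ubar k α β * (S (S (β i)) * S (r.left n) * S (α j))
          = (ubar k α β * S (S (β i))) * (S (r.left n) * S (α j)) from by noncomm_ring,
        Ubar2 α β R' hinv1 hinv2 hqt1 hqt2 hqt3 (β i)]
    rw [hu]
  rw [Finset.sum_congr rfl (fun n hn => Finset.sum_congr rfl
    (fun i (_ : i ∈ Finset.univ) => step1 n hn i))]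
  rw [Finset.sum_congr rfl (fun n (_ : n ∈ r.index) => Finset.sum_comm)]
  -- Form1 : Σₙ Σⱼ Σᵢ (βⱼ ((βᵢ ub)(S fₙ S αⱼ))) adT(αᵢ ⊗ gₙ)
  have step2 : ∀ n ∈ r.index, ∀ j : ι,
      ∑ i, (β j * ((β i * ubar k α β) * (S (r.left n) * S (α j))))
          * adT k H (α i ⊗ₜ[k] r.right n)
      = ∑ i, ∑ l, (β j * (((β i * β l) * ubar k α β) * (S (r.left n) * S (α j))))
          * (α i * (r.right n * S (α l))) := by
    intro n _ j
    have hT := congrArg (LinearMap.mul' k H ∘ₗ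
      TensorProduct.map
        (LinearMap.mulLeft k (β j) ∘ₗ LinearMap.mulRight k (S (r.left n) * S (α j))
          ∘ₗ LinearMap.mulRight k (ubar k α β))
        (act0 ∘ₗ (TensorProduct.mk k (H ⊗[k] H) H).flip (r.right n)) ∘ₗ
      (TensorProduct.comm k (H ⊗[k] H) H).toLinearMap) (hqt2' α β hqt2)
    simp only [map_sum, comp_apply, LinearEquiv.coe_coe, TensorProduct.comm_tmul,
      TensorProduct.map_tmul, mul'_apply, LinearMap.mulLeft_apply, LinearMap.mulRight_apply,
      LinearMap.flip_apply, TensorProduct.mk_apply, act0_tmul] at hT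
    calc ∑ i, (β j * ((β i * ubar k α β) * (S (r.left n) * S (α j))))
            * adT k H (α i ⊗ₜ[k] r.right n)
        = ∑ i, (β j * (β i * ubar k α β * (S (r.left n) * S (α j))))
            * act0 ((Δ (α i)) ⊗ₜ[k] r.right n) := by
          refine Finset.sum_congr rfl fun i _ => ?_
          rw [adT_apply_tmul]
      _ = ∑ i, ∑ l, (β j * (β i * β l * ubar k α β * (S (r.left n) * S (α j))))
            * (α i * (r.right n * S (α l))) := hT
      _ = ∑ i, ∑ l, (β j * (((β i * β l) * ubar k α β) * (S (r.left n) * S (α j))))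
            * (α i * (r.right n * S (α l))) := by
          exact Finset.sum_congr rfl fun i _ => Finset.sum_congr rfl fun l _ => by
            noncomm_ring
  rw [Finset.sum_congr rfl (fun n hn => Finset.sum_congr rfl
    (fun j (_ : j ∈ Finset.univ) => step2 n hn j))]
  -- reorder Σₙ Σⱼ Σᵢ Σₗ → Σₙ Σₗ Σⱼ Σᵢ
  rw [Finset.sum_congr rfl (fun n (_ : n ∈ r.index) =>
    Finset.sum_congr rfl (fun j (_ : j ∈ Finset.univ) => Finset.sum_comm))]
  rw [Finset.sum_congr rfl (fun n (_ : n ∈ r.index) => Finset.sum_comm)]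
  -- Form2 : Σₙ Σₗ Σⱼ Σᵢ (βⱼ (((βᵢ βₗ) ub)(S fₙ S αⱼ))) (αᵢ (gₙ S αₗ))
  have step3 : ∀ n ∈ r.index, ∀ l : ι,
      ∑ j, ∑ i, (β j * (((β i * β l) * ubar k α β) * (S (r.left n) * S (α j))))
          * (α i * (r.right n * S (α l)))
      = ∑ j, ((β j * β l) * ubar k α β) *
          (LinearMap.mul' k H (LinearMap.rTensor H (aS k H)
            ((Δ (α j)) * (r.left n ⊗ₜ[k] r.right n))) * S (α l)) := by
    intro n _ l
    have hT := congrArg (LinearMap.mul' k H ∘ₗ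
      TensorProduct.map
        (LinearMap.mulRight k (ubar k α β) ∘ₗ LinearMap.mulRight k (β l))
        (LinearMap.mulRight k (S (α l)) ∘ₗ LinearMap.mul' k H ∘ₗ
          LinearMap.rTensor H (aS k H) ∘ₗ
          LinearMap.mulRight k ((r.left n) ⊗ₜ[k] (r.right n))) ∘ₗ
      (TensorProduct.comm k (H ⊗[k] H) H).toLinearMap) (hqt2' α β hqt2)
    simp only [map_sum, comp_apply, LinearEquiv.coe_coe, TensorProduct.comm_tmul,
      TensorProduct.map_tmul, mul'_apply, LinearMap.mulRight_apply,
      Algebra.TensorProduct.tmul_mul_tmul, rTensor_tmul] at hT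
    refine Eq.trans ?_ hT.symm
    refine Finset.sum_congr rfl fun j _ => Finset.sum_congr rfl fun i _ => ?_
    rw [aS_mul]
    noncomm_ring
  rw [Finset.sum_congr rfl (fun n hn => Finset.sum_congr rfl
    (fun l (_ : l ∈ Finset.univ) => step3 n hn l))]
  -- Form3 : Σₙ Σₗ Σⱼ ((βⱼ βₗ) ub)(Mₙ(Δ αⱼ) S αₗ) → reorder to Σₗ Σⱼ Σₙ
  rw [Finset.sum_comm]
  rw [Finset.sum_congr rfl (fun l (_ : l ∈ Finset.univ) => Finset.sum_comm)]
  have step4 : ∀ l j : ι,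
      ∑ n ∈ r.index, ((β j * β l) * ubar k α β) *
          (LinearMap.mul' k H (LinearMap.rTensor H (aS k H)
            ((Δ (α j)) * (r.left n ⊗ₜ[k] r.right n))) * S (α l))
      = ε y • (ε (α j) • (((β j * β l) * ubar k α β) * S (α l))) := by
    intro l j
    have hM : ∑ n ∈ r.index, LinearMap.mul' k H (LinearMap.rTensor H (aS k H)
          ((Δ (α j)) * (r.left n ⊗ₜ[k] r.right n)))
        = (ε (α j) * ε y) • 1 := by
      have hsum : ∑ n ∈ r.index, (Δ (α j)) * ((r.left n) ⊗ₜ[k] (r.right n))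
          = Δ (α j * y) := by
        rw [← Finset.mul_sum, r.eq, ← Bialgebra.comul_mul]
      rw [← map_sum, ← map_sum, hsum, aS_eq, HopfAlgebra.mul_antipode_rTensor_comul_apply,
        Bialgebra.counit_mul, Algebra.algebraMap_eq_smul_one]
    calc ∑ n ∈ r.index, ((β j * β l) * ubar k α β) *
          (LinearMap.mul' k H (LinearMap.rTensor H (aS k H)
            ((Δ (α j)) * (r.left n ⊗ₜ[k] r.right n))) * S (α l))
        = ((β j * β l) * ubar k α β) * ((∑ n ∈ r.index,
            LinearMap.mul' k H (LinearMap.rTensor H (aS k H)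
              ((Δ (α j)) * (r.left n ⊗ₜ[k] r.right n)))) * S (α l)) := by
          rw [Finset.sum_mul, Finset.mul_sum]
      _ = ((β j * β l) * ubar k α β) * (((ε (α j) * ε y) • 1) * S (α l)) := by rw [hM]
      _ = ε y • (ε (α j) • (((β j * β l) * ubar k α β) * S (α l))) := by
          rw [smul_mul_assoc, one_mul, mul_smul_comm, mul_comm (ε (α j)) (ε y), mul_smul]
  rw [Finset.sum_congr rfl (fun l (_ : l ∈ Finset.univ) =>
    Finset.sum_congr rfl (fun j (_ : j ∈ Finset.univ) => step4 l j))]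
  have step5 : ∀ l : ι, ∑ j, ε y • (ε (α j) • (((β j * β l) * ubar k α β) * S (α l)))
      = ε y • (β l * (ubar k α β * S (α l))) := by
    intro l
    rw [← Finset.smul_sum]
    congr 1
    calc ∑ j, ε (α j) • (((β j * β l) * ubar k α β) * S (α l))
        = ((∑ j, ε (α j) • β j) * β l * ubar k α β) * S (α l) := by
          rw [Finset.sum_mul, Finset.sum_mul, Finset.sum_mul]
          exact Finset.sum_congr rfl fun j _ => by
            simp only [smul_mul_assoc]
      _ = β l * (ubar k α β * S (α l)) := by
          rw [u0_eq_one α β R' hinv1 hqt2, one_mul, mul_assoc]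
  rw [Finset.sum_congr rfl (fun l (_ : l ∈ Finset.univ) => step5 l), ← Finset.smul_sum,
    K1 α β R' hinv1 hqt2]

end QT
end HopfAux

/-- The transmuted antipode is an antipode for the transmuted comultiplication:
`Σ y⟨1⟩ S̲(y⟨2⟩) = Σ S̲(y⟨1⟩) y⟨2⟩ = ε(y)·1`. -/
theorem SB_antipode_DeltaB
    (α β : ι → H) (R' : H ⊗[k] H)
    (hinv : (∑ i, α i ⊗ₜ[k] β i) * R' = 1 ∧ R' * (∑ i, α i ⊗ₜ[k] β i) = 1)
    (hqt1 : ∀ x : H, (∑ i, α i ⊗ₜ[k] β i) * Coalgebra.comul (R := k) x * R'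
        = TensorProduct.comm k H H (Coalgebra.comul (R := k) x))
    (hqt2 : LinearMap.rTensor H (Coalgebra.comul (R := k)) (∑ i, α i ⊗ₜ[k] β i)
        = (∑ i, (α i ⊗ₜ[k] (1 : H)) ⊗ₜ[k] β i) * (∑ i, ((1 : H) ⊗ₜ[k] α i) ⊗ₜ[k] β i))
    (hqt3 : LinearMap.lTensor H (Coalgebra.comul (R := k)) (∑ i, α i ⊗ₜ[k] β i)
        = (∑ i, α i ⊗ₜ[k] ((1 : H) ⊗ₜ[k] β i)) * (∑ i, α i ⊗ₜ[k] (β i ⊗ₜ[k] (1 : H))))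
    (y : H) :
    mulH k H (LinearMap.lTensor H (SB k H α β) (DeltaB k H α β y))
        = Coalgebra.counit (R := k) y • (1 : H) ∧
      mulH k H (LinearMap.rTensor H (SB k H α β) (DeltaB k H α β y))
        = Coalgebra.counit (R := k) y • (1 : H) := by
  exact ⟨HopfAux.goalA α β R' hinv.1 hqt3 y,
    HopfAux.goalB α β R' hinv.1 hinv.2 hqt1 hqt2 hqt3 y⟩
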